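/- Suppose a sequence of frames F₀,…,Fₙ (each Fᵢ : Q → V → Set S) satisfies: F₀ ι v = Init and F₀ q v = ∅ for q ≠ ι; monotonicity Fᵢ q v ⊆ Fᵢ₊₁ q v; and relative inductiveness: σ ∈ Fᵢ q v ∧ (σ,σ') ∈ δ q p v → σ' ∈ Fᵢ₊₁ p v for all i < n; and edge covering for each frame: σ ∈ Fᵢ q v ∧ (σ,σ') ∈ TR → ∃ p, (σ,σ') ∈ δ q p v. Then for every trace σ₀,…,σₖ of TS with k ≤ n and every valuation v, there is a phase trace q₀ = ι,…,q_k with (σⱼ,σⱼ₊₁) ∈ δ qⱼ qⱼ₊₁ v and σⱼ ∈ Fⱼ qⱼ v for all j ≤ k. -/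
import Mathlib


/-- Frames satisfying the PDR-style conditions overapproximate the states
    reachable at each phase within the corresponding number of steps. -/
theorem frames_overapproximate_bounded_traces
    {S V Q : Type*}
    (Init : Set S) (TR : Set (S × S)) (ι : Q)
    (δ : Q → Q → V → Set (S × S))
    (n : ℕ) (F : ℕ → Q → V → Set S)
    (hF0ι : ∀ v, F 0 ι v = Init)
    (hF0 : ∀ q v, q ≠ ι → F 0 q v = ∅)
    (hmono : ∀ i < n, ∀ q v, F i q v ⊆ F (i + 1) q v)
    (hrelind : ∀ i < n, ∀ q p v σ σ',
      σ ∈ F i q v → (σ, σ') ∈ δ q p v → σ' ∈ F (i + 1) p v)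
    (hcov : ∀ i ≤ n, ∀ q v σ σ',
      σ ∈ F i q v → (σ, σ') ∈ TR → ∃ p, (σ, σ') ∈ δ q p v) :
    ∀ k ≤ n, ∀ σ : ℕ → S, σ 0 ∈ Init → (∀ j < k, (σ j, σ (j + 1)) ∈ TR) →
      ∀ v : V, ∃ qs : ℕ → Q, qs 0 = ι ∧
        (∀ j < k, (σ j, σ (j + 1)) ∈ δ (qs j) (qs (j + 1)) v) ∧
        (∀ j ≤ k, σ j ∈ F j (qs j) v) := by
  intro k
  induction k with
  | zero =>
    intro _ σ h0 _ v
    exact ⟨fun _ => ι, rfl, fun j hj => absurd hj (Nat.not_lt_zero j),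
      fun j hj => by simp at hj; subst hj; rw [hF0ι]; exact h0⟩
  | succ k ih =>
    intro hkn σ h0 hTR v
    obtain ⟨qs, hq0, hedge, hmem⟩ :=
      ih (Nat.le_of_succ_le hkn) σ h0 (fun j hj => hTR j (Nat.lt_succ_of_lt hj)) v
    have hk : σ k ∈ F k (qs k) v := hmem k le_rfl
    obtain ⟨p, hp⟩ := hcov k (Nat.le_of_succ_le hkn) (qs k) v (σ k) (σ (k+1)) hk
      (hTR k (Nat.lt_succ_self k))
    have hnext : σ (k+1) ∈ F (k+1) p v :=
      hrelind k hkn (qs k) p v (σ k) (σ (k+1)) hk hp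
    refine ⟨fun j => if j ≤ k then qs j else p, by simp [hq0], ?_, ?_⟩
    · intro j hj
      rcases Nat.lt_succ_iff_lt_or_eq.mp hj with h | h
      · have h1 : j ≤ k := le_of_lt h
        have h2 : j + 1 ≤ k := h
        simp only [h1, h2, if_pos]
        exact hedge j h
      · subst h
        simp only [le_rfl, if_pos, Nat.not_succ_le_self, if_neg]
        exact hp
    · intro j hj
      rcases Nat.lt_succ_iff_lt_or_eq.mp (Nat.lt_succ_of_le hj) with h | h
      · have h1 : j ≤ k := Nat.lt_succ_iff.mp h
        simp only [h1, if_pos]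
        exact hmem j h1
      · subst h
        simp only [Nat.not_succ_le_self, if_neg]
        exact hnext
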